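/- arXiv:1707.04040 — 4 statements merged into one kernel-verified Lean document; each statement's English description precedes it below -/
import Mathlib

section
/- Let Ψ: ℤ → ℂ² be defined by Ψ(x) = (∏_{y=1}^{x} D⁺_y) Ψ(0) for x ≥ 1 (product applied in order D⁺_x ⋯ D⁺_1), Ψ(0) given, and Ψ(x) = (∏_{y=-1}^{x} D⁻_y) Ψ(0) for x ≤ −1 (product D⁻_x ⋯ D⁻_{-1}), where D⁻_x = (D⁺_{x+1})^{-1}. Then Ψ satisfies the eigenvalue equation λΨ^L(x) = a_{x+1}Ψ^L(x+1) + b_{x+1}Ψ^R(x+1) and λΨ^R(x) = c_{x-1}Ψ^L(x-1) + d_{x-1}Ψ^R(x-1) for all x ∈ ℤ. -/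
open Matrix Complex

/-- the state built from products of transfer matrices (equivalently,
Ψ(x) = D⁺_x Ψ(x-1) for x ≥ 1 and Ψ(x) = (D⁺_{x+1})⁻¹ Ψ(x+1) for x ≤ -1)
solves the eigenvalue problem U⁽ˢ⁾Ψ = λΨ. -/
theorem product_state_is_eigenvector
    (a b c d : ℤ → ℂ)
    (hU : ∀ x : ℤ, !![a x, b x; c x, d x] ∈ Matrix.unitaryGroup (Fin 2) ℂ)
    (habcd : ∀ x : ℤ, a x * b x * c x * d x ≠ 0)
    (lam : ℂ) (hlam : ‖lam‖ = 1)
    (Dplus : ℤ → Matrix (Fin 2) (Fin 2) ℂ)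
    (hD : ∀ x : ℤ, Dplus x =
      !![(lam ^ 2 - b x * c (x - 1)) / (lam * a x), -(b x * d (x - 1)) / (lam * a x);
         c (x - 1) / lam, d (x - 1) / lam])
    (Ψ : ℤ → Fin 2 → ℂ)
    (hpos : ∀ x : ℤ, 1 ≤ x → Ψ x = (Dplus x).mulVec (Ψ (x - 1)))
    (hneg : ∀ x : ℤ, x ≤ -1 → Ψ x = (Dplus (x + 1))⁻¹.mulVec (Ψ (x + 1))) :
    ∀ x : ℤ,
      lam * Ψ x 0 = a (x + 1) * Ψ (x + 1) 0 + b (x + 1) * Ψ (x + 1) 1 ∧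
      lam * Ψ x 1 = c (x - 1) * Ψ (x - 1) 0 + d (x - 1) * Ψ (x - 1) 1 := by

  have hlam0 : lam ≠ 0 := by
    intro h; simp [h] at hlam
  have ha : ∀ x, a x ≠ 0 := fun x h => habcd x (by simp [h])
  have hd' : ∀ x, d x ≠ 0 := fun x h => habcd x (by simp [h])
  have hdet : ∀ x : ℤ, (Dplus x).det = d (x-1) / a x := by
    intro x
    rw [hD x, Matrix.det_fin_two_of]
    field_simp [hlam0, ha x]
    ring
  have hstep : ∀ x : ℤ, Ψ x = (Dplus x).mulVec (Ψ (x - 1)) := by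
    intro x
    rcases le_or_gt 1 x with h | h
    · exact hpos x h
    · have hx : x - 1 ≤ -1 := by omega
      have h2 := hneg (x-1) hx
      rw [show x - 1 + 1 = x by ring] at h2
      rw [h2, Matrix.mulVec_mulVec, Matrix.mul_nonsing_inv, Matrix.one_mulVec]
      rw [hdet]
      exact isUnit_iff_ne_zero.mpr (div_ne_zero (hd' (x-1)) (ha x))
  intro x
  constructor
  · have h1 := hstep (x+1)
    rw [hD] at h1
    have e0 := congrFun h1 0
    have e1 := congrFun h1 1
    simp [Matrix.mulVec, dotProduct, Fin.sum_univ_two,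
      show x + 1 - 1 = x from by ring] at e0 e1
    rw [e0, e1]
    field_simp [hlam0, ha (x+1)]
    ring
  · have h1 := hstep x
    rw [hD] at h1
    have e1 := congrFun h1 1
    simp [Matrix.mulVec, dotProduct, Fin.sum_univ_two] at e1
    rw [e1]
    field_simp [hlam0]
end

section
/- Let U = [[a,b],[c,d]] be unitary with abcd ≠ 0, λ ∈ ℂ with |λ|=1 and (λ² + Δ)² = 4λ²ad where Δ = ad − bc, and let ∇ = ad + bc. Define Ψ: ℤ → ℂ² by Ψ(x) = ((λ²+Δ)/(2aλ))^x · (1/(λ²+Δ)) · (α(1+x)λ² − (α∇ + 2bdβ)x + αΔ, β(1−x)λ² + (β∇ + 2acα)x + βΔ) for x ≥ 0, and Ψ(x) = ((λ²+Δ)/(2dλ))^{−x} · (1/(λ²+Δ)) · (α(1+x)λ² − (α∇ + 2bdβ)x + αΔ, β(1−x)λ² + (β∇ + 2acα)x + βΔ) for x ≤ 0 (assuming λ²+Δ ≠ 0). Then Ψ satisfies the eigenvalue equation λΨ^L(x) = aΨ^L(x+1)+bΨ^R(x+1), λΨ^R(x) = cΨ^L(x−1)+dΨ^R(x−1) for all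 x ∈ ℤ. -/
open Matrix Complex

private lemma cancel1 (K S' w lam A B P Q R : ℂ) (hw : w ≠ 0)
    (hkey : lam * P * w = S' * (A * Q + B * R)) :
    lam * (K * (1 / S') * P) =
      A * (K * (S' / w) * (1 / S') * Q) + B * (K * (S' / w) * (1 / S') * R) := by
  have h : lam * P = (S' / w) * (A * Q + B * R) := by
    rw [div_mul_eq_mul_div, eq_div_iff hw]; linear_combination hkey
  linear_combination (K * (1 / S')) * h

private lemma cancel2 (K S' w lam A B P Q R : ℂ) (hS : S' ≠ 0)
    (hkey : lam * P * S' = w * (A * Q + B * R)) :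
    lam * (K * (1 / S') * P) =
      A * (K * (S' / w)⁻¹ * (1 / S') * Q) + B * (K * (S' / w)⁻¹ * (1 / S') * R) := by
  rw [inv_div]
  have h : lam * P = (w / S') * (A * Q + B * R) := by
    rw [div_mul_eq_mul_div, eq_div_iff hS]; linear_combination hkey
  linear_combination (K * (1 / S')) * h

/-- the quadratic-polynomial-type state of Corollary 3.4(ii) solves the
eigenvalue problem for the space-homogeneous walk (multiple-root case). -/
theorem quadratic_state_is_eigenvector
    (a b c d : ℂ)
    (hU : !![a, b; c, d] ∈ Matrix.unitaryGroup (Fin 2) ℂ)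
    (habcd : a * b * c * d ≠ 0)
    (lam : ℂ) (hlam : ‖lam‖ = 1)
    (hmult : (lam ^ 2 + (a * d - b * c)) ^ 2 = 4 * lam ^ 2 * (a * d))
    (hne : lam ^ 2 + (a * d - b * c) ≠ 0)
    (α β : ℂ) (ΨL ΨR : ℤ → ℂ)
    (hpos : ∀ x : ℤ, 0 ≤ x →
      ΨL x = ((lam ^ 2 + (a * d - b * c)) / (2 * a * lam)) ^ x *
        (1 / (lam ^ 2 + (a * d - b * c))) *
        (α * (1 + (x : ℂ)) * lam ^ 2 - (α * (a * d + b * c) + 2 * b * d * β) * (x : ℂ)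
          + α * (a * d - b * c)) ∧
      ΨR x = ((lam ^ 2 + (a * d - b * c)) / (2 * a * lam)) ^ x *
        (1 / (lam ^ 2 + (a * d - b * c))) *
        (β * (1 - (x : ℂ)) * lam ^ 2 + (β * (a * d + b * c) + 2 * a * c * α) * (x : ℂ)
          + β * (a * d - b * c)))
    (hneg : ∀ x : ℤ, x ≤ 0 →
      ΨL x = ((lam ^ 2 + (a * d - b * c)) / (2 * d * lam)) ^ (-x) *
        (1 / (lam ^ 2 + (a * d - b * c))) *
        (α * (1 + (x : ℂ)) * lam ^ 2 - (α * (a * d + b * c) + 2 * b * d * β) * (x : ℂ)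
          + α * (a * d - b * c)) ∧
      ΨR x = ((lam ^ 2 + (a * d - b * c)) / (2 * d * lam)) ^ (-x) *
        (1 / (lam ^ 2 + (a * d - b * c))) *
        (β * (1 - (x : ℂ)) * lam ^ 2 + (β * (a * d + b * c) + 2 * a * c * α) * (x : ℂ)
          + β * (a * d - b * c))) :
    ∀ x : ℤ,
      lam * ΨL x = a * ΨL (x + 1) + b * ΨR (x + 1) ∧
      lam * ΨR x = c * ΨL (x - 1) + d * ΨR (x - 1) := by
  have ha : a ≠ 0 := fun h => habcd (by simp [h])
  have hd : d ≠ 0 := fun h => habcd (by simp [h])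
  have hlam0 : lam ≠ 0 := by
    intro h; rw [h] at hlam; simp at hlam
  have h2a : (2 : ℂ) * a * lam ≠ 0 := by
    exact mul_ne_zero (mul_ne_zero two_ne_zero ha) hlam0
  have h2d : (2 : ℂ) * d * lam ≠ 0 := by
    exact mul_ne_zero (mul_ne_zero two_ne_zero hd) hlam0
  have hμ : (lam ^ 2 + (a * d - b * c)) / (2 * a * lam) ≠ 0 := div_ne_zero hne h2a
  have hν : (lam ^ 2 + (a * d - b * c)) / (2 * d * lam) ≠ 0 := div_ne_zero hne h2d
  intro x
  constructor
  · rcases le_or_gt 0 x with hx | hx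
    · obtain ⟨hL, -⟩ := hpos x hx
      obtain ⟨hL', hR'⟩ := hpos (x + 1) (by omega)
      rw [hL, hL', hR', zpow_add_one₀ hμ]
      apply cancel1 _ _ _ _ _ _ _ _ _ h2a
      push_cast
      linear_combination (x : ℂ) * (a * α + b * β) * hmult
    · obtain ⟨hL, -⟩ := hneg x (by omega)
      obtain ⟨hL', hR'⟩ := hneg (x + 1) (by omega)
      rw [hL, hL', hR', show -(x + 1) = -x - 1 from by ring, zpow_sub_one₀ hν]
      apply cancel2 _ _ _ _ _ _ _ _ _ hne
      push_cast
      linear_combination lam * α * (1 + (x : ℂ)) * hmult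
  · rcases le_or_gt 1 x with hx | hx
    · obtain ⟨-, hR⟩ := hpos x (by omega)
      obtain ⟨hL', hR'⟩ := hpos (x - 1) (by omega)
      rw [hR, hL', hR', zpow_sub_one₀ hμ]
      apply cancel2 _ _ _ _ _ _ _ _ _ hne
      push_cast
      linear_combination lam * β * (1 - (x : ℂ)) * hmult
    · obtain ⟨-, hR⟩ := hneg x (by omega)
      obtain ⟨hL', hR'⟩ := hneg (x - 1) (by omega)
      rw [hR, hL', hR', show -(x - 1) = -x + 1 from by ring, zpow_add_one₀ hν]
      apply cancel1 _ _ _ _ _ _ _ _ _ h2d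
      push_cast
      linear_combination (-(x : ℂ)) * (c * α + d * β) * hmult
end

section
/- Consider the two-defect QW on ℤ with coins U_x = [[cos θ, sin θ],[sin θ, −cos θ]] for x = ±m and U_x = [[1,0],[0,−1]] otherwise, m ≥ 1 and cos θ ≠ 0. For λ on the unit circle and initial values α, β ∈ ℂ, the function Ψ defined piecewise by Ψ(x) = (λ^x α, (−1/λ)^x β) for 0 ≤ x ≤ m−1, Ψ(m) = ((1/cos θ)(λ^m α − sin θ (−1/λ)^m β), (−1/λ)^m β), Ψ(m+1) = ((λ/cos θ)(λ^m α − sin θ(−1/λ)^m β), (1/(λ cos θ))(sin θ λ^m α − (−1/λ)^m β)), Ψ(x) = (λ^{x−(m+1)}Ψ^L(m+1), (−1/λ)^{x−(m+1)}Ψ^R(m+1)) for x ≥ m+2, and symmetrically for x < 0, satisfies the eigenvalue equation λΨ(x) = P_{x+1}Ψ(x+1) + Q_{x-1}Ψ(x-1) for all x ∈ ℤ. -/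
open Complex

/-- the piecewise-defined state for the two-defect walk (defects at ±m)
solves the eigenvalue problem. -/
theorem two_defect_eigenvector
    (m : ℤ) (hm : 1 ≤ m) (θ : ℝ) (hθ : Real.cos θ ≠ 0)
    (lam : ℂ) (hlam : ‖lam‖ = 1)
    (a b c d : ℤ → ℂ)
    (hcoin : ∀ x : ℤ,
      (x = m ∨ x = -m →
        a x = (Real.cos θ : ℂ) ∧ b x = (Real.sin θ : ℂ) ∧
        c x = (Real.sin θ : ℂ) ∧ d x = -(Real.cos θ : ℂ)) ∧
      (¬(x = m ∨ x = -m) → a x = 1 ∧ b x = 0 ∧ c x = 0 ∧ d x = -1))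
    (α β : ℂ) (ΨL ΨR : ℤ → ℂ)
    (h0 : ∀ x : ℤ, 0 ≤ x → x ≤ m - 1 → ΨL x = lam ^ x * α ∧ ΨR x = (-1 / lam) ^ x * β)
    (hm1 : ΨL m = (1 / (Real.cos θ : ℂ)) * (lam ^ m * α - (Real.sin θ : ℂ) * (-1 / lam) ^ m * β) ∧
           ΨR m = (-1 / lam) ^ m * β)
    (hm2 : ΨL (m + 1) = (lam / (Real.cos θ : ℂ)) *
             (lam ^ m * α - (Real.sin θ : ℂ) * (-1 / lam) ^ m * β) ∧
           ΨR (m + 1) = (1 / (lam * (Real.cos θ : ℂ))) *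
             ((Real.sin θ : ℂ) * lam ^ m * α - (-1 / lam) ^ m * β))
    (hp : ∀ x : ℤ, m + 2 ≤ x →
      ΨL x = lam ^ (x - (m + 1)) * ΨL (m + 1) ∧
      ΨR x = (-1 / lam) ^ (x - (m + 1)) * ΨR (m + 1))
    (h0' : ∀ x : ℤ, -m + 1 ≤ x → x ≤ 0 →
      ΨL x = (1 / lam) ^ (-x) * α ∧ ΨR x = (-lam) ^ (-x) * β)
    (hn1 : ΨL (-m) = lam ^ (-m) * α ∧
           ΨR (-m) = (1 / (Real.cos θ : ℂ)) *
             ((Real.sin θ : ℂ) * lam ^ (-m) * α + (-lam) ^ m * β))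
    (hn2 : ΨL (-m - 1) = (1 / (lam * (Real.cos θ : ℂ))) *
             (lam ^ (-m) * α + (Real.sin θ : ℂ) * (-lam) ^ m * β) ∧
           ΨR (-m - 1) = -(lam / (Real.cos θ : ℂ)) *
             ((Real.sin θ : ℂ) * lam ^ (-m) * α + (-lam) ^ m * β))
    (hn : ∀ x : ℤ, x ≤ -m - 2 →
      ΨL x = (1 / lam) ^ (-x - (m + 1)) * ΨL (-m - 1) ∧
      ΨR x = (-lam) ^ (-x - (m + 1)) * ΨR (-m - 1)) :
    ∀ x : ℤ,
      lam * ΨL x = a (x + 1) * ΨL (x + 1) + b (x + 1) * ΨR (x + 1) ∧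
      lam * ΨR x = c (x - 1) * ΨL (x - 1) + d (x - 1) * ΨR (x - 1) := by
  have hl0 : lam ≠ 0 := by
    intro h; rw [h] at hlam; simp at hlam
  have hc0 : (Real.cos θ : ℂ) ≠ 0 := by exact_mod_cast hθ
  have hμ0 : (-1 / lam : ℂ) ≠ 0 := by
    simp [div_ne_zero_iff, hl0]
  have hν0 : (-lam : ℂ) ≠ 0 := neg_ne_zero.mpr hl0
  have hpy : (Real.sin θ : ℂ) ^ 2 + (Real.cos θ : ℂ) ^ 2 = 1 := by
    exact_mod_cast Real.sin_sq_add_cos_sq θ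
  set sθ := (Real.sin θ : ℂ) with hsθ
  set cθ := (Real.cos θ : ℂ) with hcθ
  have hinvμ : ((-1 / lam : ℂ))⁻¹ = -lam := by field_simp [hl0, hc0]
  have hmm : ((-1 / lam : ℂ)) ^ (-m) = (-lam) ^ m := by
    rw [zpow_neg, ← inv_zpow, hinvμ]
  have hmid : ∀ x : ℤ, -m + 1 ≤ x → x ≤ m - 1 →
      ΨL x = lam ^ x * α ∧ ΨR x = (-1 / lam) ^ x * β := by
    intro x h1 h2
    rcases le_or_gt 0 x with hx | hx
    · exact h0 x hx h2
    · obtain ⟨e1, e2⟩ := h0' x h1 hx.le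
      constructor
      · rw [e1, one_div, inv_zpow', neg_neg]
      · rw [e2, show (-lam : ℂ) = ((-1/lam : ℂ))⁻¹ from hinvμ.symm, inv_zpow', neg_neg]
  have hp' : ∀ x : ℤ, m + 1 ≤ x →
      ΨL x = lam ^ (x - (m + 1)) * ΨL (m + 1) ∧
      ΨR x = (-1 / lam) ^ (x - (m + 1)) * ΨR (m + 1) := by
    intro x hx
    rcases eq_or_lt_of_le hx with h | h
    · rw [← h]; simp
    · exact hp x (by omega)
  have hn' : ∀ x : ℤ, x ≤ -m - 1 →
      ΨL x = (1 / lam) ^ (-x - (m + 1)) * ΨL (-m - 1) ∧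
      ΨR x = (-lam) ^ (-x - (m + 1)) * ΨR (-m - 1) := by
    intro x hx
    rcases eq_or_lt_of_le hx with h | h
    · rw [h, show -(-m - 1) - (m + 1) = (0:ℤ) by ring]; simp
    · exact hn x (by omega)
  intro x
  rcases le_or_gt x (-m - 2) with hx | hx
  · -- far left
    obtain ⟨e1, e2⟩ := hn' x (by omega)
    obtain ⟨f1, f2⟩ := hn' (x + 1) (by omega)
    obtain ⟨g1, g2⟩ := hn' (x - 1) (by omega)
    obtain ⟨a1, b1, c1, d1⟩ := (hcoin (x + 1)).2 (by omega)
    obtain ⟨a2, b2, c2, d2⟩ := (hcoin (x - 1)).2 (by omega)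
    constructor
    · rw [e1, f1, f2, a1, b1,
        show -x - (m + 1) = (-(x + 1) - (m + 1)) + 1 by ring,
        zpow_add_one₀ (one_div_ne_zero hl0)]
      set K := ((1 : ℂ) / lam) ^ (-(x + 1) - (m + 1))
      field_simp [hl0, hc0]
      ring
    · rw [e2, g1, g2, c2, d2,
        show -(x - 1) - (m + 1) = (-x - (m + 1)) + 1 by ring,
        zpow_add_one₀ hν0]
      ring
  · rcases eq_or_lt_of_le (by omega : -m - 1 ≤ x) with hx1 | hx1
    · -- x = -m-1
      rw [← hx1]
      obtain ⟨e1, e2⟩ := hn2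
      obtain ⟨f1, f2⟩ := hn1
      obtain ⟨g1, g2⟩ := hn' (-m - 2) (by omega)
      obtain ⟨a1, b1, c1, d1⟩ := (hcoin (-m - 1 + 1)).1 (by omega)
      obtain ⟨a2, b2, c2, d2⟩ := (hcoin (-m - 1 - 1)).2 (by omega)
      constructor
      · rw [show (-m - 1 + 1 : ℤ) = -m by ring] at a1 b1 ⊢
        rw [e1, f1, f2, a1, b1]
        set A := lam ^ (-m); set B := (-lam) ^ m
        field_simp [hl0, hc0]
        linear_combination (-(A * α)) * hpy
      · rw [show (-m - 1 - 1 : ℤ) = -m - 2 by ring] at c2 d2 ⊢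
        rw [g2, c2, d2,
          show -(-m - 2) - (m + 1) = (1:ℤ) by ring, zpow_one]
        ring
    · rcases lt_or_ge x (-m + 1) with hx2 | hx2
      · -- x = -m
        have hxm : x = -m := by omega
        rw [hxm]
        obtain ⟨f1, f2⟩ := hn1
        obtain ⟨g1, g2⟩ := hn2
        obtain ⟨e1, e2⟩ := hmid (-m + 1) (by omega) (by omega)
        obtain ⟨a1, b1, c1, d1⟩ := (hcoin (-m + 1)).2 (by omega)
        obtain ⟨a2, b2, c2, d2⟩ := (hcoin (-m - 1)).2 (by omega)
        constructor
        · rw [f1, e1, e2, a1, b1, zpow_add_one₀ hl0]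
          ring
        · rw [f2, g1, g2, c2, d2]
          ring
      · rcases le_or_gt x (m - 1) with hx3 | hx3
        · -- middle: -m+1 ≤ x ≤ m-1
          obtain ⟨e1, e2⟩ := hmid x (by omega) (by omega)
          constructor
          · rcases eq_or_lt_of_le hx3 with hY | hY
            · -- x = m-1, defect at m
              subst hY
              rw [show (m - 1 + 1 : ℤ) = m by ring]
              obtain ⟨a1, b1, c1, d1⟩ := (hcoin m).1 (Or.inl rfl)
              obtain ⟨f1, f2⟩ := hm1
              have hstep : lam ^ m = lam ^ (m - 1) * lam := by
                have h := zpow_add_one₀ hl0 (m - 1)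
                rwa [show m - 1 + 1 = m by ring] at h
              rw [e1, a1, b1, f1, f2, hstep]
              set A := lam ^ (m - 1); set B := (-1 / lam : ℂ) ^ m
              field_simp [hl0, hc0]
              ring
            · obtain ⟨a1, b1, c1, d1⟩ := (hcoin (x + 1)).2 (by omega)
              obtain ⟨f1, f2⟩ := hmid (x + 1) (by omega) (by omega)
              rw [e1, f1, f2, a1, b1, zpow_add_one₀ hl0]
              ring
          · rcases eq_or_lt_of_le hx2 with hY | hY
            · -- x = -m+1, defect at -m
              rw [← hY] at e2 ⊢
              rw [show (-m + 1 - 1 : ℤ) = -m by ring]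
              obtain ⟨a2, b2, c2, d2⟩ := (hcoin (-m)).1 (Or.inr rfl)
              obtain ⟨f1, f2⟩ := hn1
              rw [e2, c2, d2, f1, f2, zpow_add_one₀ hμ0, hmm]
              set A := lam ^ (-m); set B := (-lam) ^ m
              field_simp [hl0, hc0]
              ring
            · obtain ⟨a2, b2, c2, d2⟩ := (hcoin (x - 1)).2 (by omega)
              obtain ⟨f1, f2⟩ := hmid (x - 1) (by omega) (by omega)
              have hstep : (-1 / lam : ℂ) ^ x = (-1 / lam) ^ (x - 1) * (-1 / lam) := by
                have h := zpow_add_one₀ hμ0 (x - 1)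
                rwa [show x - 1 + 1 = x by ring] at h
              rw [e2, f1, f2, c2, d2, hstep]
              set K := (-1 / lam : ℂ) ^ (x - 1)
              field_simp [hl0, hc0]
              ring
        · rcases eq_or_lt_of_le (by omega : m ≤ x) with hY | hY
          · -- x = m
            rw [← hY]
            obtain ⟨e1, e2⟩ := hm1
            obtain ⟨f1, f2⟩ := hm2
            obtain ⟨g1, g2⟩ := hmid (m - 1) (by omega) (by omega)
            obtain ⟨a1, b1, c1, d1⟩ := (hcoin (m + 1)).2 (by omega)
            obtain ⟨a2, b2, c2, d2⟩ := (hcoin (m - 1)).2 (by omega)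
            constructor
            · rw [e1, f1, f2, a1, b1]; ring
            · have hstep : (-1 / lam : ℂ) ^ m = (-1 / lam) ^ (m - 1) * (-1 / lam) := by
                have h := zpow_add_one₀ hμ0 (m - 1)
                rwa [show m - 1 + 1 = m by ring] at h
              rw [e2, g1, g2, c2, d2, hstep]
              set K := (-1 / lam : ℂ) ^ (m - 1)
              field_simp [hl0, hc0]
              ring
          · rcases eq_or_lt_of_le (by omega : m + 1 ≤ x) with hY1 | hY1
            · -- x = m+1
              rw [← hY1]
              obtain ⟨e1, e2⟩ := hm2
              obtain ⟨f1, f2⟩ := hm1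
              obtain ⟨g1, g2⟩ := hp' (m + 2) (by omega)
              obtain ⟨a1, b1, c1, d1⟩ := (hcoin (m + 1 + 1)).2 (by omega)
              obtain ⟨a2, b2, c2, d2⟩ := (hcoin (m + 1 - 1)).1 (by omega)
              constructor
              · rw [show (m + 1 + 1 : ℤ) = m + 2 by ring] at a1 b1 ⊢
                rw [a1, b1, g1, show (m + 2 : ℤ) - (m + 1) = 1 by ring, zpow_one]
                ring
              · rw [show (m + 1 - 1 : ℤ) = m by ring] at c2 d2 ⊢
                rw [e2, f1, f2, c2, d2]
                set A := lam ^ m; set B := (-1 / lam : ℂ) ^ m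
                field_simp [hl0, hc0]
                linear_combination (B * β) * hpy
            · -- x ≥ m+2
              obtain ⟨e1, e2⟩ := hp' x (by omega)
              obtain ⟨f1, f2⟩ := hp' (x + 1) (by omega)
              obtain ⟨g1, g2⟩ := hp' (x - 1) (by omega)
              obtain ⟨a1, b1, c1, d1⟩ := (hcoin (x + 1)).2 (by omega)
              obtain ⟨a2, b2, c2, d2⟩ := (hcoin (x - 1)).2 (by omega)
              constructor
              · rw [e1, f1, f2, a1, b1,
                  show x + 1 - (m + 1) = (x - (m + 1)) + 1 by ring,
                  zpow_add_one₀ hl0]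
                ring
              · rw [e2, g1, g2, c2, d2,
                  show x - (m + 1) = (x - 1 - (m + 1)) + 1 by ring,
                  zpow_add_one₀ hμ0]
                set K := (-1 / lam : ℂ) ^ (x - 1 - (m + 1))
                field_simp [hl0, hc0]
                ring
end

section
/- For the space-homogeneous walk with unitary coin U = [[a,b],[c,d]], abcd ≠ 0, and λ with |λ| = 1 and Λ_+ ≠ Λ_- (i.e., (λ²+Δ)² ≠ 4λ²ad), the function Ψ defined for x ≥ 1 by Ψ^L(x) = (1/(Λ_+ − Λ_-))[Λ_+^x(Ψ^L(1) − Λ_-α) − Λ_-^x(Ψ^L(1) − Λ_+α)] and Ψ^R(x) = (1/(Λ_+ − Λ_-))[Λ_+^x(Ψ^R(1) − Λ_-β) − Λ_-^x(Ψ^R(1) − Λ_+β)], where Ψ^L(1) = (αλ² − b(dβ + cα))/(aλ) and Ψ^R(1) = (dβ + cα)/λ, satisfies the one-sided eigenvalue relations λΨ^L(x) = aΨ^L(x+1) + bΨ^R(x+1) for all x ≥ 0 and λΨ^R(x) = cΨ^L(x−1) + dΨ^R(x−1) for all x ≥ 2, with Ψ^L(0) = α, Ψ^R(0) = β. -/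
open Matrix Complex

/-- the distinct-root closed form on x ≥ 1 satisfies the one-sided
eigenvalue relations for the homogeneous walk. -/
theorem distinct_root_one_sided_eigen
    (a b c d : ℂ)
    (hU : !![a, b; c, d] ∈ Matrix.unitaryGroup (Fin 2) ℂ)
    (habcd : a * b * c * d ≠ 0)
    (lam : ℂ) (hlam : ‖lam‖ = 1)
    (sq : ℂ) (hsq : sq ^ 2 = (lam ^ 2 + (a * d - b * c)) ^ 2 - 4 * lam ^ 2 * (a * d))
    (hdist : (lam ^ 2 + (a * d - b * c)) ^ 2 ≠ 4 * lam ^ 2 * (a * d))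
    (α β : ℂ) (ΨL ΨR : ℤ → ℂ)
    (hL0 : ΨL 0 = α) (hR0 : ΨR 0 = β)
    (hL1 : ΨL 1 = (α * lam ^ 2 - b * (d * β + c * α)) / (a * lam))
    (hR1 : ΨR 1 = (d * β + c * α) / lam)
    (hLp : ∀ x : ℤ, 1 ≤ x →
      ΨL x = (1 / (((lam ^ 2 + (a * d - b * c)) + sq) / (2 * a * lam)
                  - ((lam ^ 2 + (a * d - b * c)) - sq) / (2 * a * lam))) *
        ((((lam ^ 2 + (a * d - b * c)) + sq) / (2 * a * lam)) ^ x *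
            (ΨL 1 - ((lam ^ 2 + (a * d - b * c)) - sq) / (2 * a * lam) * α)
         - (((lam ^ 2 + (a * d - b * c)) - sq) / (2 * a * lam)) ^ x *
            (ΨL 1 - ((lam ^ 2 + (a * d - b * c)) + sq) / (2 * a * lam) * α)))
    (hRp : ∀ x : ℤ, 1 ≤ x →
      ΨR x = (1 / (((lam ^ 2 + (a * d - b * c)) + sq) / (2 * a * lam)
                  - ((lam ^ 2 + (a * d - b * c)) - sq) / (2 * a * lam))) *
        ((((lam ^ 2 + (a * d - b * c)) + sq) / (2 * a * lam)) ^ x *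
            (ΨR 1 - ((lam ^ 2 + (a * d - b * c)) - sq) / (2 * a * lam) * β)
         - (((lam ^ 2 + (a * d - b * c)) - sq) / (2 * a * lam)) ^ x *
            (ΨR 1 - ((lam ^ 2 + (a * d - b * c)) + sq) / (2 * a * lam) * β))) :
    (∀ x : ℤ, 0 ≤ x → lam * ΨL x = a * ΨL (x + 1) + b * ΨR (x + 1)) ∧
    (∀ x : ℤ, 2 ≤ x → lam * ΨR x = c * ΨL (x - 1) + d * ΨR (x - 1)) ∧
    ΨL 0 = α ∧ ΨR 0 = β := by
  have ha : a ≠ 0 := by rintro rfl; simp at habcd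
  have hb : b ≠ 0 := by rintro rfl; simp at habcd
  have hc : c ≠ 0 := by rintro rfl; simp at habcd
  have hd : d ≠ 0 := by rintro rfl; simp at habcd
  have hl : lam ≠ 0 := by intro h; rw [h] at hlam; simp at hlam
  set Lp := ((lam ^ 2 + (a * d - b * c)) + sq) / (2 * a * lam) with hLpd
  set Lm := ((lam ^ 2 + (a * d - b * c)) - sq) / (2 * a * lam) with hLmd
  clear_value Lp Lm
  have hsq0 : sq ≠ 0 := by
    intro h; rw [h] at hsq; exact hdist (by linear_combination -hsq)
  have hsum0 : a * lam * Lp + a * lam * Lm = lam ^ 2 + (a * d - b * c) := by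
    rw [hLpd, hLmd]; field_simp; ring
  have hprod0 : a * (Lp * Lm) = d := by
    rw [hLpd, hLmd]; field_simp; linear_combination (-1) * hsq
  have htne : Lp - Lm ≠ 0 := by
    have h2 : Lp - Lm = sq / (a * lam) := by rw [hLpd, hLmd]; field_simp; ring
    rw [h2]; exact div_ne_zero hsq0 (mul_ne_zero ha hl)
  have hLp0 : Lp ≠ 0 := by intro h; apply hd; rw [← hprod0, h]; ring
  have hLm0 : Lm ≠ 0 := by intro h; apply hd; rw [← hprod0, h]; ring
  have hal : a * lam ≠ 0 := mul_ne_zero ha hl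
  have hv1 : a * lam * ΨL 1 = α * lam ^ 2 - b * (d * β + c * α) := by
    rw [hL1]; field_simp
  have hv2 : lam * ΨR 1 = d * β + c * α := by
    rw [hR1]; field_simp
  have keyA : lam * (ΨL 1 - Lm * α) = a * Lp * (ΨL 1 - Lm * α) + b * Lp * (ΨR 1 - Lm * β) := by
    apply mul_left_cancel₀ hal
    linear_combination (lam - a * Lp) * hv1 + (-(a * b * Lp)) * hv2 +
      (a * lam * α + b * lam * β) * hprod0 + (-(lam * α)) * hsum0
  have keyB : lam * (ΨL 1 - Lp * α) = a * Lm * (ΨL 1 - Lp * α) + b * Lm * (ΨR 1 - Lp * β) := by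
    apply mul_left_cancel₀ hal
    linear_combination (lam - a * Lm) * hv1 + (-(a * b * Lm)) * hv2 +
      (a * lam * α + b * lam * β) * hprod0 + (-(lam * α)) * hsum0
  have keyC : lam * Lp * (ΨR 1 - Lm * β) = c * (ΨL 1 - Lm * α) + d * (ΨR 1 - Lm * β) := by
    apply mul_left_cancel₀ hal
    linear_combination (a * lam * Lp - a * d) * hv2 + (-c) * hv1 +
      (d * β + c * α) * hsum0 + (-(lam ^ 2 * β)) * hprod0
  have keyD : lam * Lm * (ΨR 1 - Lp * β) = c * (ΨL 1 - Lp * α) + d * (ΨR 1 - Lp * β) := by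
    apply mul_left_cancel₀ hal
    linear_combination (a * lam * Lm - a * d) * hv2 + (-c) * hv1 +
      (d * β + c * α) * hsum0 + (-(lam ^ 2 * β)) * hprod0
  refine ⟨?_, ?_, hL0, hR0⟩
  · intro x hx
    rcases eq_or_lt_of_le hx with h0 | h1
    · rw [← h0]
      norm_num [hL0, hL1, hR1]
      field_simp; ring
    · have hx1 : (1 : ℤ) ≤ x := by omega
      rw [hLp x hx1, hLp (x + 1) (by omega), hRp (x + 1) (by omega),
          zpow_add_one₀ hLp0, zpow_add_one₀ hLm0]
      linear_combination ((1 / (Lp - Lm)) * Lp ^ x) * keyA - ((1 / (Lp - Lm)) * Lm ^ x) * keyB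
  · intro x hx
    rw [hRp x (by omega), hLp (x - 1) (by omega), hRp (x - 1) (by omega)]
    have e1 : Lp ^ x = Lp ^ (x - 1) * Lp := by rw [← zpow_add_one₀ hLp0]; ring_nf
    have e2 : Lm ^ x = Lm ^ (x - 1) * Lm := by rw [← zpow_add_one₀ hLm0]; ring_nf
    rw [e1, e2]
    linear_combination ((1 / (Lp - Lm)) * Lp ^ (x - 1)) * keyC - ((1 / (Lp - Lm)) * Lm ^ (x - 1)) * keyD
end
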